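/- Let (n,δ) be a finite-dimensional 2-step nilpotent Lie bialgebra over a field k of characteristic zero, with center z and a fixed linear complement W so that n = W ⊕ z. Let δ₁ : W → Λ²W be the composition of δ restricted to W with the projection of Λ²n = Λ²W ⊕ (W∧z) ⊕ Λ²z onto Λ²W. Then δ₁ satisfies the co-Jacobi identity, i.e. δ₁ is a Lie coalgebra structure on W: writing δ₁(v) = v₁∧v₂ (sum understood), δ₁(v₁)∧v₂ − v₁∧δ₁(v₂) = 0 in Λ³W for all v ∈ W. -/

import Mathlib

open TensorProduct

/-- The adjoint action of a Lie algebra `g` on `g ⊗ g`, determined by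
`x · (a ⊗ b) = ⁅x,a⁆ ⊗ b + a ⊗ ⁅x,b⁆`. -/
noncomputable def tAct (k g : Type*) [CommRing k] [LieRing g] [LieAlgebra k g] (x : g) :
    g ⊗[k] g →ₗ[k] g ⊗[k] g :=
  TensorProduct.map (LieAlgebra.ad k g x) LinearMap.id
    + TensorProduct.map LinearMap.id (LieAlgebra.ad k g x)

/-- The cyclic rotation `(a⊗b)⊗c ↦ (c⊗a)⊗b` on `(g⊗g)⊗g`. -/
noncomputable def tCyc (k g : Type*) [CommRing k] [AddCommGroup g] [Module k g] :
    (g ⊗[k] g) ⊗[k] g →ₗ[k] (g ⊗[k] g) ⊗[k] g :=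
  ((TensorProduct.assoc k g g g).symm.toLinearMap).comp
    (TensorProduct.comm k (g ⊗[k] g) g).toLinearMap

/-- For submodules `P Q ⊆ g`, the image of `P ⊗ Q` in `g ⊗ g`. -/
noncomputable def tsub (k g : Type*) [CommRing k] [AddCommGroup g] [Module k g]
    (P Q : Submodule k g) : Submodule k (g ⊗[k] g) :=
  LinearMap.range (TensorProduct.map P.subtype Q.subtype)

/-- for a finite-dimensional 2-step nilpotent Lie bialgebra `(n,δ)` with center
`z` and complement `W`, the `Λ²W`-component `δ₁` of `δ|_W` satisfies co-Jacobi, i.e. is a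
Lie coalgebra structure on `W`.  Cobrackets with values in `Λ²` are modelled as
antisymmetric-tensor-valued maps, and the co-Jacobi identity
`δ₁(v₁)∧v₂ − v₁∧δ₁(v₂) = 0 ∈ Λ³W` is expressed in its equivalent tensor form
`(1 + ξ + ξ²)(δ₁ ⊗ id)δ₁ = 0` (`ξ` the cyclic rotation). -/
noncomputable def ctr (k n : Type*) [CommRing k] [AddCommGroup n] [Module k n]
    (f : Module.Dual k n) : n ⊗[k] n →ₗ[k] n :=
  TensorProduct.lift ((LinearMap.lsmul k n).comp f)

lemma ctr_tmul (k n : Type*) [CommRing k] [AddCommGroup n] [Module k n]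
    (f : Module.Dual k n) (a b : n) : ctr k n f (a ⊗ₜ[k] b) = f a • b := rfl

lemma ctr_map (k n : Type*) [CommRing k] [AddCommGroup n] [Module k n]
    (f : Module.Dual k n) (g : n →ₗ[k] n) (t : n ⊗[k] n) :
    ctr k n f ((TensorProduct.map LinearMap.id g) t) = g (ctr k n f t) := by
  induction t using TensorProduct.induction_on with
  | zero => simp
  | tmul a b => simp [ctr_tmul]
  | add x y hx hy => simp [hx, hy]

lemma sep (k n : Type*) [Field k] [AddCommGroup n] [Module k n] [FiniteDimensional k n]
    (q : n ⊗[k] n) (h : ∀ f : Module.Dual k n, ctr k n f q = 0) : q = 0 := by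
  let Φ : n ⊗[k] n ≃ₗ[k] (Module.Dual k n →ₗ[k] n) :=
    (TensorProduct.congr (Module.evalEquiv k n) (LinearEquiv.refl k n)).trans
      (dualTensorHomEquiv k (Module.Dual k n) n)
  have key : ∀ (f : Module.Dual k n) (t : n ⊗[k] n), Φ t f = ctr k n f t := by
    intro f t
    induction t using TensorProduct.induction_on with
    | zero => simp
    | tmul a b =>
        simp [Φ, ctr_tmul, dualTensorHomEquiv, dualTensorHomEquivOfBasis_apply]
    | add x y hx hy => simp [map_add, LinearMap.add_apply, hx, hy]
  have hΦ : Φ q = 0 := by ext f; simp [key, h]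
  simpa using Φ.injective (by simpa using hΦ)

theorem stmt3 (k n : Type*) [Field k] [CharZero k] [LieRing n] [LieAlgebra k n]
    [FiniteDimensional k n]
    (h2step : ∀ x y : n, ⁅x, y⁆ ∈ LieAlgebra.center k n)
    (W : Submodule k n)
    (hcompl : IsCompl (LieAlgebra.center k n).toSubmodule W)
    (δ : n →ₗ[k] n ⊗[k] n)
    -- δ is a Lie bialgebra structure:
    (hanti : ∀ x, TensorProduct.comm k n n (δ x) = - δ x)
    (hcoJ : ∀ x, (TensorProduct.map δ LinearMap.id) (δ x)
        + tCyc k n ((TensorProduct.map δ LinearMap.id) (δ x))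
        + tCyc k n (tCyc k n ((TensorProduct.map δ LinearMap.id) (δ x))) = 0)
    (hcoc : ∀ x y, δ ⁅x, y⁆ = tAct k n x (δ y) - tAct k n y (δ x))
    -- δ₁ is the Λ²W-component of δ on W:
    (δ₁ : n →ₗ[k] n ⊗[k] n)
    (hδ₁W : ∀ v ∈ W, δ₁ v ∈ tsub k n W W)
    (hδ₁anti : ∀ v ∈ W, TensorProduct.comm k n n (δ₁ v) = - δ₁ v)
    (hδ₁comp : ∀ v ∈ W, δ v - δ₁ v ∈
      tsub k n W (LieAlgebra.center k n).toSubmodule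
        ⊔ tsub k n (LieAlgebra.center k n).toSubmodule W
        ⊔ tsub k n (LieAlgebra.center k n).toSubmodule (LieAlgebra.center k n).toSubmodule) :
    -- conclusion: δ₁ satisfies co-Jacobi on W
    ∀ v ∈ W, (TensorProduct.map δ₁ LinearMap.id) (δ₁ v)
        + tCyc k n ((TensorProduct.map δ₁ LinearMap.id) (δ₁ v))
        + tCyc k n (tCyc k n ((TensorProduct.map δ₁ LinearMap.id) (δ₁ v))) = 0 := by
  classical
  set Z : Submodule k n := (LieAlgebra.center k n).toSubmodule with hZdef
  -- projections
  set pW : n →ₗ[k] n := W.subtype ∘ₗ (W.projectionOnto Z hcompl.symm) with hpWdef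
  set pZ : n →ₗ[k] n := Z.subtype ∘ₗ (Z.projectionOnto W hcompl) with hpZdef
  have hmemZ : ∀ z : n, z ∈ Z ↔ ∀ x : n, ⁅x, z⁆ = 0 := by
    intro z
    rw [hZdef, LieSubmodule.mem_toSubmodule]
    exact LieModule.mem_maxTrivSubmodule k n n z
  have hpW_W : ∀ w ∈ W, pW w = w := by
    intro w hw
    simp [hpWdef, Submodule.projectionOnto_apply_left hcompl.symm ⟨w, hw⟩,
      Submodule.projectionOnto_apply_left (p := W) (q := Z) hcompl.symm ⟨w, hw⟩]
  have hpW_Z : ∀ z ∈ Z, pW z = 0 := by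
    intro z hz
    simp [hpWdef, Submodule.projectionOnto_apply_of_mem_right hcompl.symm hz]
  have hpZ_Z : ∀ z ∈ Z, pZ z = z := by
    intro z hz
    simp [hpZdef, Submodule.projectionOnto_apply_left hcompl ⟨z, hz⟩]
  have hpZ_W : ∀ w ∈ W, pZ w = 0 := by
    intro w hw
    simp [hpZdef, Submodule.projectionOnto_apply_of_mem_right hcompl hw]
  have hadd : ∀ x : n, pZ x + pW x = x := by
    intro x
    simpa [hpWdef, hpZdef] using
      Submodule.projection_add_projection_eq_self hcompl x
  -- bracket facts
  have hbZ : ∀ x y : n, ⁅x, y⁆ ∈ Z := by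
    intro x y; rw [hZdef, LieSubmodule.mem_toSubmodule]; exact h2step x y
  have hzb : ∀ z ∈ Z, ∀ y : n, ⁅z, y⁆ = 0 := by
    intro z hz y
    have : ⁅y, z⁆ = 0 := (hmemZ z).mp hz y
    rw [← lie_skew, this, neg_zero]
  have hbz : ∀ z ∈ Z, ∀ y : n, ⁅y, z⁆ = 0 := fun z hz y => (hmemZ z).mp hz y
  -- Step 1: invariance of δ on the center
  have key0 : ∀ z ∈ Z, ∀ x : n, tAct k n x (δ z) = 0 := by
    intro z hz x
    have hzx : ⁅x, z⁆ = 0 := hbz z hz x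
    have hActz : ∀ t : n ⊗[k] n, tAct k n z t = 0 := by
      intro t
      induction t using TensorProduct.induction_on with
      | zero => simp
      | tmul a b =>
          simp [tAct, TensorProduct.map_tmul, LieAlgebra.ad_apply, hzb z hz]
      | add s t hs ht => simp [map_add, hs, ht]
    have := hcoc x z
    rw [hzx] at this
    simp only [map_zero] at this
    rw [hActz (δ x)] at this
    simpa using this.symm
  -- Step 2: projecting the invariance
  have keyW : ∀ z ∈ Z, ∀ x : n,
      (TensorProduct.map pW (LieAlgebra.ad k n x)) (δ z) = 0 := by
    intro z hz x
    have hcomp : ∀ t : n ⊗[k] n,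
        (TensorProduct.map pW pZ) (tAct k n x t)
          = (TensorProduct.map pW (LieAlgebra.ad k n x)) t := by
      intro t
      induction t using TensorProduct.induction_on with
      | zero => simp
      | tmul a b =>
          simp [tAct, TensorProduct.map_tmul, LieAlgebra.ad_apply,
            hpW_Z _ (hbZ x a), hpZ_Z _ (hbZ x b)]
      | add s t hs ht => simp [map_add, hs, ht]
    rw [← hcomp (δ z), key0 z hz x, map_zero]
  -- Step 3: the W⊗W component of δ vanishes on the center
  have center_proj : ∀ z ∈ Z, (TensorProduct.map pW pW) (δ z) = 0 := by
    intro z hz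
    set q : n ⊗[k] n := (TensorProduct.map pW pW) (δ z) with hq
    have hqa : ∀ x : n, (TensorProduct.map LinearMap.id (LieAlgebra.ad k n x)) q = 0 := by
      intro x
      have hc : ∀ t : n ⊗[k] n,
          (TensorProduct.map LinearMap.id (LieAlgebra.ad k n x))
              ((TensorProduct.map pW pW) t)
            = (TensorProduct.map pW (LieAlgebra.ad k n x)) t := by
        intro t
        induction t using TensorProduct.induction_on with
        | zero => simp
        | tmul a b =>
            have hpZb : pZ b ∈ Z := by
              rw [hpZdef]; exact (Z.projectionOnto W hcompl b).2
            have h0 : ⁅x, pZ b⁆ = 0 := hbz _ hpZb x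
            have hkey : ⁅x, pW b⁆ = ⁅x, b⁆ := by
              calc ⁅x, pW b⁆ = ⁅x, pZ b + pW b⁆ := by rw [lie_add, h0, zero_add]
                _ = ⁅x, b⁆ := by rw [hadd]
            simp [TensorProduct.map_tmul, LieAlgebra.ad_apply, hkey]
        | add s t hs ht => simp [map_add, hs, ht]
      rw [hq, hc (δ z), keyW z hz x]
    have hqz : (TensorProduct.map LinearMap.id pZ) q = 0 := by
      have hc : ∀ t : n ⊗[k] n,
          (TensorProduct.map LinearMap.id pZ) ((TensorProduct.map pW pW) t) = 0 := by
        intro t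
        induction t using TensorProduct.induction_on with
        | zero => simp
        | tmul a b =>
            have hpWb : pW b ∈ W := by
              rw [hpWdef]; exact (W.projectionOnto Z hcompl.symm b).2
            simp [TensorProduct.map_tmul, hpZ_W _ hpWb]
        | add s t hs ht => simp [map_add, hs, ht]
      rw [hq]; exact hc (δ z)
    apply sep
    intro f
    have hv1 : ∀ x : n, ⁅x, ctr k n f q⁆ = 0 := by
      intro x
      have := ctr_map k n f (LieAlgebra.ad k n x) q
      rw [hqa x, map_zero] at this
      simpa [LieAlgebra.ad_apply] using this.symm
    have hvZ : ctr k n f q ∈ Z := (hmemZ _).mpr hv1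
    have hv2 : pZ (ctr k n f q) = 0 := by
      have := ctr_map k n f pZ q
      rw [hqz, map_zero] at this
      exact this.symm
    rw [hpZ_Z _ hvZ] at hv2
    exact hv2
  -- membership facts for images of projections
  have hpWmem : ∀ b : n, pW b ∈ W := by
    intro b; rw [hpWdef]; exact (W.projectionOnto Z hcompl.symm b).2
  -- Step 4: δ₁ is the projection of δ on W
  have proj_δ₁ : ∀ v ∈ W, (TensorProduct.map pW pW) (δ v) = δ₁ v := by
    intro v hv
    have h1 : (TensorProduct.map pW pW) (δ₁ v) = δ₁ v := by
      obtain ⟨u, hu⟩ := hδ₁W v hv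
      rw [← hu]
      clear hu
      induction u using TensorProduct.induction_on with
      | zero => simp
      | tmul a b =>
          simp [TensorProduct.map_tmul, hpW_W _ a.2, hpW_W _ b.2]
      | add s t hs ht => simp [map_add, hs, ht]
    have hkillWZ : ∀ t ∈ tsub k n W Z, (TensorProduct.map pW pW) t = 0 := by
      rintro t ⟨u, rfl⟩
      induction u using TensorProduct.induction_on with
      | zero => simp
      | tmul a b => simp [TensorProduct.map_tmul, hpW_Z _ b.2]
      | add s t hs ht => simp [map_add, hs, ht]
    have hkillZW : ∀ t ∈ tsub k n Z W, (TensorProduct.map pW pW) t = 0 := by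
      rintro t ⟨u, rfl⟩
      induction u using TensorProduct.induction_on with
      | zero => simp
      | tmul a b => simp [TensorProduct.map_tmul, hpW_Z _ a.2]
      | add s t hs ht => simp [map_add, hs, ht]
    have hkillZZ : ∀ t ∈ tsub k n Z Z, (TensorProduct.map pW pW) t = 0 := by
      rintro t ⟨u, rfl⟩
      induction u using TensorProduct.induction_on with
      | zero => simp
      | tmul a b => simp [TensorProduct.map_tmul, hpW_Z _ a.2]
      | add s t hs ht => simp [map_add, hs, ht]
    have h2 : (TensorProduct.map pW pW) (δ v - δ₁ v) = 0 := by
      have hm := hδ₁comp v hv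
      rw [Submodule.mem_sup] at hm
      obtain ⟨s, hs, c, hc, hsum⟩ := hm
      rw [Submodule.mem_sup] at hs
      obtain ⟨a, ha, b, hb, rfl⟩ := hs
      rw [← hsum, map_add, map_add, hkillWZ a ha, hkillZW b hb, hkillZZ c hc]
      simp
    rw [map_sub, h1] at h2
    exact sub_eq_zero.mp h2
  -- the triple projection
  set P3 : (n ⊗[k] n) ⊗[k] n →ₗ[k] (n ⊗[k] n) ⊗[k] n :=
    TensorProduct.map (TensorProduct.map pW pW) pW with hP3def
  have hPcyc : ∀ t : (n ⊗[k] n) ⊗[k] n, P3 (tCyc k n t) = tCyc k n (P3 t) := by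
    intro t
    induction t using TensorProduct.induction_on with
    | zero => simp
    | tmul s c =>
        induction s using TensorProduct.induction_on with
        | zero => simp [TensorProduct.zero_tmul]
        | tmul a b =>
            simp [hP3def, tCyc, TensorProduct.comm_tmul, TensorProduct.assoc_symm_tmul,
              TensorProduct.map_tmul]
        | add s₁ s₂ h₁ h₂ =>
            simp only [TensorProduct.add_tmul, map_add, h₁, h₂]
    | add s t hs ht => simp [map_add, hs, ht]
  intro v hv
  -- Claim B
  have hB1 : P3 ((TensorProduct.map δ LinearMap.id) (δ₁ v))
      = (TensorProduct.map δ₁ LinearMap.id) (δ₁ v) := by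
    obtain ⟨u, hu⟩ := hδ₁W v hv
    rw [← hu]
    clear hu
    induction u using TensorProduct.induction_on with
    | zero => simp
    | tmul a b =>
        simp only [TensorProduct.map_tmul, LinearMap.id_coe, id_eq, hP3def,
          Submodule.coe_subtype]
        rw [proj_δ₁ _ a.2, hpW_W _ b.2]
    | add s t hs ht => simp only [map_add, hs, ht]
  have hB2 : P3 ((TensorProduct.map δ LinearMap.id) (δ v - δ₁ v)) = 0 := by
    have hkWZ : ∀ t ∈ tsub k n W Z,
        P3 ((TensorProduct.map δ LinearMap.id) t) = 0 := by
      rintro t ⟨u, rfl⟩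
      induction u using TensorProduct.induction_on with
      | zero => simp
      | tmul a b =>
          simp only [TensorProduct.map_tmul, LinearMap.id_coe, id_eq, hP3def,
            Submodule.coe_subtype]
          rw [hpW_Z _ b.2, TensorProduct.tmul_zero]
      | add s t hs ht => simp only [map_add, hs, ht, add_zero]
    have hkZW : ∀ t ∈ tsub k n Z W,
        P3 ((TensorProduct.map δ LinearMap.id) t) = 0 := by
      rintro t ⟨u, rfl⟩
      induction u using TensorProduct.induction_on with
      | zero => simp
      | tmul a b =>
          simp only [TensorProduct.map_tmul, LinearMap.id_coe, id_eq, hP3def,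
            Submodule.coe_subtype]
          rw [center_proj _ a.2, TensorProduct.zero_tmul]
      | add s t hs ht => simp only [map_add, hs, ht, add_zero]
    have hkZZ : ∀ t ∈ tsub k n Z Z,
        P3 ((TensorProduct.map δ LinearMap.id) t) = 0 := by
      rintro t ⟨u, rfl⟩
      induction u using TensorProduct.induction_on with
      | zero => simp
      | tmul a b =>
          simp only [TensorProduct.map_tmul, LinearMap.id_coe, id_eq, hP3def,
            Submodule.coe_subtype]
          rw [center_proj _ a.2, TensorProduct.zero_tmul]
      | add s t hs ht => simp only [map_add, hs, ht, add_zero]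
    have hm := hδ₁comp v hv
    rw [Submodule.mem_sup] at hm
    obtain ⟨s, hs, c, hc, hsum⟩ := hm
    rw [Submodule.mem_sup] at hs
    obtain ⟨a, ha, b, hb, rfl⟩ := hs
    rw [← hsum, map_add, map_add, map_add, map_add, hkWZ a ha, hkZW b hb, hkZZ c hc]
    simp
  have hB : (TensorProduct.map δ₁ LinearMap.id) (δ₁ v)
      = P3 ((TensorProduct.map δ LinearMap.id) (δ v)) := by
    have : (TensorProduct.map δ LinearMap.id) (δ v)
        = (TensorProduct.map δ LinearMap.id) (δ₁ v)
          + (TensorProduct.map δ LinearMap.id) (δ v - δ₁ v) := by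
      rw [← map_add, add_sub_cancel]
    rw [this, map_add, hB1, hB2, add_zero]
  rw [hB, ← hPcyc, ← hPcyc, ← P3.map_add, ← P3.map_add, hcoJ v, map_zero]
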